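/- Let $U, V$ be Hilbert spaces, $F: U \to V$ a bounded linear operator, $1 < q \le 2$, $\mathcal{R}_q(u) = \sum_i w_i|\langle\phi_i,u\rangle|^q$ with orthonormal basis $(\phi_i)$ and $w_i \ge w_{\min} > 0$, and let $u^\dagger$ with $\partial\mathcal{R}_q(u^\dagger) \in \operatorname{range}(F^*)$. Then there exist $\beta_1, \beta_2 > 0$ and $\rho > \mathcal{R}_q(u^\dagger)$ such that $\mathcal{R}_q(u) - \mathcal{R}_q(u^\dagger) \ge \beta_1\|u - u^\dagger\|^2 - \beta_2\|F(u) - F(u^\dagger)\|$ for all $u$ with $\mathcal{R}_q(u) < \rho$. -/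

import Mathlib

open scoped InnerProductSpace
open Set

lemma aux_sign_eq {q s : ℝ} (hq1 : 1 < q) :
    q * |s| ^ (q - 1) * Real.sign s = q * |s| ^ (q - 2) * s := by
  rcases lt_trichotomy s 0 with hs | rfl | hs
  · rw [Real.sign_of_neg hs, abs_of_neg hs]
    rw [show q - 1 = (q - 2) + 1 by ring, Real.rpow_add_one (by linarith : (-s) ≠ 0)]
    ring
  · simp [Real.sign_zero]
  · rw [Real.sign_of_pos hs, abs_of_pos hs]
    rw [show q - 1 = (q - 2) + 1 by ring, Real.rpow_add_one hs.ne']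
    ring

lemma aux_strong {q M : ℝ} (hq1 : 1 < q) (hq2 : q ≤ 2) (hM : 0 < M) :
    ∀ s t : ℝ, |s| ≤ M → |t| ≤ M →
      q * (q - 1) * M ^ (q - 2) / 2 * (t - s) ^ 2 ≤
        |t| ^ q - |s| ^ q - q * |s| ^ (q - 1) * Real.sign s * (t - s) := by
  set c0 : ℝ := q * (q - 1) * M ^ (q - 2) with hc0
  have hc0pos : 0 < c0 := by
    have h2 := Real.rpow_pos_of_pos hM (q - 2)
    exact mul_pos (mul_pos (by linarith) (by linarith)) h2
  set g : ℝ → ℝ := fun x => |x| ^ q - c0 / 2 * x ^ 2 with hg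
  set g' : ℝ → ℝ := fun x => q * |x| ^ (q - 2) * x - c0 * x with hg'
  have hderiv : ∀ x : ℝ, HasDerivAt g (g' x) x := by
    intro x
    have h1 := hasDerivAt_abs_rpow x hq1
    have h2 : HasDerivAt (fun x : ℝ => c0 / 2 * x ^ 2) (c0 / 2 * (2 * x ^ 1)) x :=
      (hasDerivAt_pow 2 x).const_mul (c0 / 2)
    have := h1.sub h2
    rw [show g' x = q * |x| ^ (q - 2) * x - c0 / 2 * (2 * x ^ 1) by simp only [hg']; ring]
    exact this
  -- monotonicity on [0, M]
  have hmono_pos : MonotoneOn g' (Icc 0 M) := by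
    have heq : EqOn g' (fun x => q * x ^ (q - 1) - c0 * x) (Icc 0 M) := by
      intro x hx
      rcases eq_or_lt_of_le hx.1 with h | h
      · simp [hg', ← h, Real.zero_rpow (by linarith : q - 1 ≠ 0)]
      · simp only [hg', abs_of_pos h]
        rw [show q - 1 = (q - 2) + 1 by ring, Real.rpow_add_one h.ne']
        ring
    refine MonotoneOn.congr ?_ heq.symm
    refine monotoneOn_of_deriv_nonneg (convex_Icc 0 M) ?_ ?_ ?_
    · refine ContinuousOn.sub (ContinuousOn.mul continuousOn_const ?_)
        (continuousOn_const.mul continuousOn_id)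
      exact continuousOn_id.rpow_const (fun x _ => Or.inr (by linarith))
    · rw [interior_Icc]
      intro x hx
      exact (((Real.hasDerivAt_rpow_const (p := q - 1) (Or.inl hx.1.ne')).const_mul q).sub
        ((hasDerivAt_id x).const_mul c0)).differentiableAt.differentiableWithinAt
    · rw [interior_Icc]
      intro x hx
      have hd : deriv (fun x => q * x ^ (q - 1) - c0 * x) x
          = q * ((q - 1) * x ^ (q - 1 - 1)) - c0 * 1 := by
        exact (((Real.hasDerivAt_rpow_const (p := q - 1) (Or.inl hx.1.ne')).const_mul q).sub
          ((hasDerivAt_id x).const_mul c0)).deriv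
      rw [hd]
      have hxM : M ^ (q - 2) ≤ x ^ (q - 2) :=
        Real.rpow_le_rpow_of_nonpos hx.1 hx.2.le (by linarith)
      have : q - 1 - 1 = q - 2 := by ring
      rw [this]
      have hle : c0 ≤ q * (q - 1) * x ^ (q - 2) := by
        rw [hc0]
        exact mul_le_mul_of_nonneg_left hxM (by nlinarith)
      linarith [hle]
  have hodd : ∀ x : ℝ, g' (-x) = - g' x := by
    intro x; simp [hg', abs_neg]; ring
  have hmono : MonotoneOn g' (Icc (-M) M) := by
    intro a ha b hb hab
    rcases le_total 0 a with h0a | ha0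
    · exact hmono_pos ⟨h0a, ha.2⟩ ⟨h0a.trans hab, hb.2⟩ hab
    rcases le_total b 0 with hb0 | h0b
    · have := hmono_pos (a := -b) (b := -a) ⟨by linarith, by linarith [hb.1]⟩
        ⟨by linarith, by linarith [ha.1]⟩ (by linarith)
      rw [hodd, hodd] at this; linarith
    · have h1 : g' a ≤ g' 0 := by
        have := hmono_pos (a := 0) (b := -a) ⟨le_refl 0, hM.le⟩
          ⟨by linarith, by linarith [ha.1]⟩ (by linarith)
        rw [hodd] at this
        have h00 : g' 0 = 0 := by simp [hg']
        rw [h00] at this ⊢; linarith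
      have h2 : g' 0 ≤ g' b := hmono_pos ⟨le_refl 0, hM.le⟩ ⟨h0b, hb.2⟩ h0b
      linarith
  -- tangent line inequality
  intro s t hs ht
  have hsI : s ∈ Icc (-M) M := abs_le.1 hs
  have htI : t ∈ Icc (-M) M := abs_le.1 ht
  have tangent : g' s * (t - s) ≤ g t - g s := by
    rcases lt_trichotomy s t with hst | rfl | hts
    · obtain ⟨x, hx, hx'⟩ := exists_hasDerivAt_eq_slope g g' hst
        (fun y _ => (hderiv y).continuousAt.continuousWithinAt) (fun y _ => hderiv y)
      have hxI : x ∈ Icc (-M) M := ⟨by linarith [hx.1, hsI.1], by linarith [hx.2, htI.2]⟩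
      have hgs : g' s ≤ g' x := hmono hsI hxI hx.1.le
      have heq2 : g t - g s = g' x * (t - s) := by
        rw [hx', div_mul_cancel₀ _ (sub_ne_zero.2 hst.ne')]
      have := mul_le_mul_of_nonneg_right hgs (by linarith : (0:ℝ) ≤ t - s)
      linarith [heq2, this]
    · simp
    · obtain ⟨x, hx, hx'⟩ := exists_hasDerivAt_eq_slope g g' hts
        (fun y _ => (hderiv y).continuousAt.continuousWithinAt) (fun y _ => hderiv y)
      have hxI : x ∈ Icc (-M) M := ⟨by linarith [hx.1, htI.1], by linarith [hx.2, hsI.2]⟩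
      have hgs : g' x ≤ g' s := hmono hxI hsI hx.2.le
      have heq2 : g s - g t = g' x * (s - t) := by
        rw [hx', div_mul_cancel₀ _ (sub_ne_zero.2 hts.ne')]
      have := mul_le_mul_of_nonneg_right hgs (by linarith : (0:ℝ) ≤ s - t)
      linarith [heq2, this]
  rw [aux_sign_eq hq1]
  simp only [hg, hg'] at tangent
  linarith [tangent]


theorem linear_source_implies_variational
    {U V : Type*} [NormedAddCommGroup U] [InnerProductSpace ℝ U] [CompleteSpace U]
    [NormedAddCommGroup V] [InnerProductSpace ℝ V] [CompleteSpace V]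
    (F : U →L[ℝ] V) (b : HilbertBasis ℕ ℝ U)
    (q : ℝ) (hq1 : 1 < q) (hq2 : q ≤ 2)
    (w : ℕ → ℝ) (wmin : ℝ) (hwmin : 0 < wmin) (hw : ∀ i, wmin ≤ w i)
    (R : U → ℝ) (hR : ∀ u : U, R u = ∑' i, w i * |⟪b i, u⟫_ℝ| ^ q)
    (udag : U) (hudag : Summable (fun i => w i * |⟪b i, udag⟫_ℝ| ^ q))
    (ξ : U)
    (hξ : ∀ i, ⟪b i, ξ⟫_ℝ = q * w i * |⟪b i, udag⟫_ℝ| ^ (q - 1) * Real.sign ⟪b i, udag⟫_ℝ)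
    (η : V) (hsource : ξ = ContinuousLinearMap.adjoint F η) :
    ∃ β₁ > 0, ∃ β₂ > 0, ∃ ρ > R udag, ∀ u : U,
      Summable (fun i => w i * |⟪b i, u⟫_ℝ| ^ q) → R u < ρ →
      β₁ * ‖u - udag‖ ^ 2 - β₂ * ‖F u - F udag‖ ≤ R u - R udag := by
  have hq0 : (0:ℝ) < q := by linarith
  set ρ : ℝ := R udag + wmin with hρdef
  have hRdag_nonneg : 0 ≤ R udag := by
    rw [hR]
    exact tsum_nonneg fun i => mul_nonneg ((le_trans hwmin.le (hw i))) (Real.rpow_nonneg (abs_nonneg _) _)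
  set M : ℝ := (ρ / wmin) ^ (1 / q) with hMdef
  have hratio : 0 < ρ / wmin := div_pos (by simp only [hρdef]; linarith) hwmin
  have hM : 0 < M := Real.rpow_pos_of_pos hratio _
  set c : ℝ := q * (q - 1) * M ^ (q - 2) / 2 with hcdef
  have hc : 0 < c := by
    have h2 := Real.rpow_pos_of_pos hM (q - 2)
    have : 0 < q * (q - 1) * M ^ (q - 2) := mul_pos (mul_pos (by linarith) (by linarith)) h2
    linarith
  have hkey := aux_strong hq1 hq2 hM
  -- bound helper
  have hbound : ∀ x : ℝ, wmin * |x| ^ q ≤ ρ → |x| ≤ M := by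
    intro x hx
    have h1 : |x| ^ q ≤ ρ / wmin := (le_div_iff₀ hwmin).2 (by linarith [hx])
    have h2 : (|x| ^ q) ^ (1 / q) ≤ (ρ / wmin) ^ (1 / q) :=
      Real.rpow_le_rpow (by positivity) h1 (by positivity)
    rwa [← Real.rpow_mul (abs_nonneg x), mul_one_div_cancel hq0.ne', Real.rpow_one] at h2
  refine ⟨wmin * c, mul_pos hwmin hc, ‖η‖ + 1, by positivity, ρ,
    by simp only [hρdef]; linarith, ?_⟩
  intro u hsum hRu
  set d : U := u - udag with hd
  -- coefficient bounds
  have hsbound : ∀ i, |⟪b i, udag⟫_ℝ| ≤ M := by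
    intro i
    refine hbound _ ?_
    have h1 : w i * |⟪b i, udag⟫_ℝ| ^ q ≤ R udag := by
      rw [hR]
      exact Summable.le_tsum hudag i fun j _ => mul_nonneg ((le_trans hwmin.le (hw j))) (Real.rpow_nonneg (abs_nonneg _) _)
    have h2 : wmin * |⟪b i, udag⟫_ℝ| ^ q ≤ w i * |⟪b i, udag⟫_ℝ| ^ q :=
      mul_le_mul_of_nonneg_right (hw i) (by positivity)
    simp only [hρdef]; linarith
  have htbound : ∀ i, |⟪b i, u⟫_ℝ| ≤ M := by
    intro i
    refine hbound _ ?_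
    have h1 : w i * |⟪b i, u⟫_ℝ| ^ q ≤ R u := by
      rw [hR]
      exact Summable.le_tsum hsum i fun j _ => mul_nonneg ((le_trans hwmin.le (hw j))) (Real.rpow_nonneg (abs_nonneg _) _)
    have h2 : wmin * |⟪b i, u⟫_ℝ| ^ q ≤ w i * |⟪b i, u⟫_ℝ| ^ q :=
      mul_le_mul_of_nonneg_right (hw i) (by positivity)
    linarith
  -- summability facts
  have hsq : Summable (fun i => ⟪b i, d⟫_ℝ ^ 2) := by
    have := b.summable_inner_mul_inner d d
    refine this.congr fun i => ?_
    rw [real_inner_comm d (b i)]; ring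
  have hsq_tsum : ∑' i, ⟪b i, d⟫_ℝ ^ 2 = ‖d‖ ^ 2 := by
    have := b.tsum_inner_mul_inner d d
    rw [real_inner_self_eq_norm_sq] at this
    rw [← this]
    refine tsum_congr fun i => ?_
    rw [real_inner_comm d (b i)]; ring
  have hxisum : Summable (fun i => ⟪b i, ξ⟫_ℝ * ⟪b i, d⟫_ℝ) := by
    have := b.summable_inner_mul_inner ξ d
    refine this.congr fun i => ?_
    rw [real_inner_comm ξ (b i)]
  have hxitsum : ∑' i, ⟪b i, ξ⟫_ℝ * ⟪b i, d⟫_ℝ = ⟪ξ, d⟫_ℝ := by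
    have := b.tsum_inner_mul_inner ξ d
    rw [← this]
    refine tsum_congr fun i => ?_
    rw [real_inner_comm ξ (b i)]
  -- termwise inequality
  set L : ℕ → ℝ := fun i => w i * |⟪b i, u⟫_ℝ| ^ q - w i * |⟪b i, udag⟫_ℝ| ^ q
      - ⟪b i, ξ⟫_ℝ * ⟪b i, d⟫_ℝ with hL
  have hterm : ∀ i, wmin * c * ⟪b i, d⟫_ℝ ^ 2 ≤ L i := by
    intro i
    have hdi : ⟪b i, d⟫_ℝ = ⟪b i, u⟫_ℝ - ⟪b i, udag⟫_ℝ := inner_sub_right _ _ _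
    have hki := hkey (⟪b i, udag⟫_ℝ) (⟪b i, u⟫_ℝ) (hsbound i) (htbound i)
    rw [← hcdef] at hki
    simp only [hL, hξ i, hdi]
    set sv := ⟪b i, udag⟫_ℝ
    set tv := ⟪b i, u⟫_ℝ
    have hwi := hw i
    have hsq' : (0:ℝ) ≤ (tv - sv) ^ 2 := sq_nonneg _
    have hscalar : 0 ≤ |tv| ^ q - |sv| ^ q - q * |sv| ^ (q - 1) * Real.sign sv * (tv - sv) := by
      linarith [hki, mul_nonneg hc.le hsq']
    have hA := mul_le_mul_of_nonneg_left hki hwmin.le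
    have hB := mul_le_mul_of_nonneg_right hwi hscalar
    linarith [hA, hB]
  have hSL : Summable L := (hsum.sub hudag).sub hxisum
  have hLtsum : ∑' i, L i = R u - R udag - ⟪ξ, d⟫_ℝ := by
    simp only [hL]
    rw [Summable.tsum_sub (hsum.sub hudag) hxisum, Summable.tsum_sub hsum hudag, hxitsum, hR, hR]
  have hmain : wmin * c * ‖d‖ ^ 2 ≤ R u - R udag - ⟪ξ, d⟫_ℝ := by
    calc wmin * c * ‖d‖ ^ 2 = ∑' i, wmin * c * ⟪b i, d⟫_ℝ ^ 2 := by
          rw [tsum_mul_left, hsq_tsum]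
      _ ≤ ∑' i, L i := Summable.tsum_le_tsum hterm (hsq.mul_left _) hSL
      _ = R u - R udag - ⟪ξ, d⟫_ℝ := hLtsum
  -- source condition
  have hFd : ⟪ξ, d⟫_ℝ = ⟪η, F u - F udag⟫_ℝ := by
    rw [hsource, ContinuousLinearMap.adjoint_inner_left, hd, map_sub]
  have hcs : -((‖η‖ + 1) * ‖F u - F udag‖) ≤ ⟪ξ, d⟫_ℝ := by
    rw [hFd]
    have h1 := abs_real_inner_le_norm η (F u - F udag)
    have h2 : (0:ℝ) ≤ ‖F u - F udag‖ := norm_nonneg _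
    have := neg_abs_le ⟪η, F u - F udag⟫_ℝ
    nlinarith [this, h1, h2]
  have hnorm : (0:ℝ) ≤ ‖F u - F udag‖ := norm_nonneg _
  linarith [hmain, hcs]
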